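/- Let 0 < p ≤ 1 and t ≥ 0. Let W : ℕ → ℝ → ℝ satisfy W_0(x) = 1 for all x ∈ [0,1], and for every n ≥ 1 and x ∈ [0,1], W_n(x) = (1 − p·x)·e^{−t·x}·W_{n−1}(x) + p·∫_0^x e^{−t·y}·W_{n−1}(y) dy. Then for every x ∈ [0,1] and every z with 0 ≤ z < 1, the series Σ_{n=0}^{∞} W_n(x)·z^n converges and equals (1 − z·(1 − p·x)·e^{−t·x})^{−1} · exp( ∫_0^x p·z·e^{−t·s} / (1 − z·(1 − p·s)·e^{−t·s}) ds ). -/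

import Mathlib

set_option maxHeartbeats 1000000

open MeasureTheory intervalIntegral

noncomputable def Vaux (p t : ℝ) : ℕ → ℝ → ℝ
  | 0 => fun _ => 1
  | n+1 => fun x => (1 - p*x) * Real.exp (-t*x) * Vaux p t n x
      + p * ∫ y in (0:ℝ)..x, Real.exp (-t*y) * Vaux p t n y

lemma Vaux_cont (p t : ℝ) (n : ℕ) : Continuous (Vaux p t n) := by
  induction n with
  | zero => exact continuous_const
  | succ n ih =>
    have hcont : Continuous fun y => Real.exp (-t*y) * Vaux p t n y :=
      (Real.continuous_exp.comp (by continuity)).mul ih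
    have h2 : Continuous fun x => ∫ y in (0:ℝ)..x, Real.exp (-t*y) * Vaux p t n y :=
      intervalIntegral.continuous_primitive (fun a b => hcont.intervalIntegrable a b) 0
    show Continuous fun x => (1 - p*x) * Real.exp (-t*x) * Vaux p t n x
      + p * ∫ y in (0:ℝ)..x, Real.exp (-t*y) * Vaux p t n y
    exact (((continuous_const.sub (continuous_const.mul continuous_id)).mul
      (Real.continuous_exp.comp (by continuity))).mul ih).add (continuous_const.mul h2)

lemma Vaux_mem (p t : ℝ) (hp : 0 < p) (hp1 : p ≤ 1) (ht : 0 ≤ t) (n : ℕ) :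
    ∀ x ∈ Set.Icc (0:ℝ) 1, Vaux p t n x ∈ Set.Icc (0:ℝ) 1 := by
  induction n with
  | zero => intro x hx; exact ⟨zero_le_one, le_refl 1⟩
  | succ n ih =>
    rintro x ⟨hx0, hx1⟩
    have hpx0 : 0 ≤ 1 - p * x := by nlinarith
    have hexp1 : ∀ y : ℝ, 0 ≤ y → Real.exp (-t*y) ≤ 1 := by
      intro y hy
      rw [← Real.exp_zero]
      exact Real.exp_le_exp.mpr (by nlinarith)
    have hib : ∀ y ∈ Set.Icc (0:ℝ) x, 0 ≤ Real.exp (-t*y) * Vaux p t n y ∧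
        Real.exp (-t*y) * Vaux p t n y ≤ 1 := by
      rintro y ⟨hy0, hyx⟩
      have hy := ih y ⟨hy0, hyx.trans hx1⟩
      constructor
      · exact mul_nonneg (Real.exp_pos _).le hy.1
      · calc Real.exp (-t*y) * Vaux p t n y ≤ 1 * 1 :=
            mul_le_mul (hexp1 y hy0) hy.2 hy.1 zero_le_one
          _ = 1 := mul_one 1
    have hint : IntervalIntegrable (fun y => Real.exp (-t*y) * Vaux p t n y) volume 0 x :=
      ((Real.continuous_exp.comp (by continuity)).mul (Vaux_cont p t n)).intervalIntegrable 0 x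
    have hIlo : 0 ≤ ∫ y in (0:ℝ)..x, Real.exp (-t*y) * Vaux p t n y := by
      apply intervalIntegral.integral_nonneg hx0
      intro y hy; exact (hib y hy).1
    have hIhi : (∫ y in (0:ℝ)..x, Real.exp (-t*y) * Vaux p t n y) ≤ x := by
      have := intervalIntegral.integral_mono_on hx0 hint
        (_root_.intervalIntegrable_const (c := (1:ℝ))) (fun y hy => (hib y hy).2)
      simpa using this
    have hVx := ih x ⟨hx0, hx1⟩
    have hexx := hexp1 x hx0
    constructor
    · show 0 ≤ (1 - p*x) * Real.exp (-t*x) * Vaux p t n x + p * ∫ y in (0:ℝ)..x,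
          Real.exp (-t*y) * Vaux p t n y
      have hh := mul_nonneg (mul_nonneg hpx0 (Real.exp_pos (-t*x)).le) hVx.1
      nlinarith
    · show (1 - p*x) * Real.exp (-t*x) * Vaux p t n x + (p * ∫ y in (0:ℝ)..x,
          Real.exp (-t*y) * Vaux p t n y) ≤ 1
      have h1 : (1 - p*x) * Real.exp (-t*x) * Vaux p t n x ≤ 1 - p*x := by
        have h2 : Real.exp (-t*x) * Vaux p t n x ≤ 1 := by
          nlinarith [hVx.1, hVx.2, (Real.exp_pos (-t*x)).le]
        nlinarith
      nlinarith

lemma Vaux_eq_W (p t : ℝ) (W : ℕ → ℝ → ℝ) (hW0 : ∀ x ∈ Set.Icc (0 : ℝ) 1, W 0 x = 1)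
    (hWrec : ∀ n : ℕ, ∀ x ∈ Set.Icc (0 : ℝ) 1,
      W (n + 1) x = (1 - p * x) * Real.exp (-t * x) * W n x
        + p * ∫ y in (0 : ℝ)..x, Real.exp (-t * y) * W n y) :
    ∀ n : ℕ, ∀ x ∈ Set.Icc (0:ℝ) 1, W n x = Vaux p t n x := by
  intro n
  induction n with
  | zero => intro x hx; exact hW0 x hx
  | succ n ih =>
    rintro x hx
    obtain ⟨hx0, hx1⟩ := hx
    rw [hWrec n x ⟨hx0, hx1⟩]
    show _ = (1 - p*x) * Real.exp (-t*x) * Vaux p t n x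
      + p * ∫ y in (0:ℝ)..x, Real.exp (-t*y) * Vaux p t n y
    rw [ih x ⟨hx0, hx1⟩]
    congr 1
    congr 1
    apply intervalIntegral.integral_congr
    intro y hy
    rw [Set.uIcc_of_le hx0] at hy
    simp only []
    rw [ih y ⟨hy.1, hy.2.trans hx1⟩]

theorem stmt8 (p t : ℝ) (hp : 0 < p) (hp1 : p ≤ 1) (ht : 0 ≤ t)
    (W : ℕ → ℝ → ℝ) (hW0 : ∀ x ∈ Set.Icc (0 : ℝ) 1, W 0 x = 1)
    (hWrec : ∀ n : ℕ, ∀ x ∈ Set.Icc (0 : ℝ) 1,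
      W (n + 1) x = (1 - p * x) * Real.exp (-t * x) * W n x
        + p * ∫ y in (0 : ℝ)..x, Real.exp (-t * y) * W n y) :
    ∀ x ∈ Set.Icc (0 : ℝ) 1, ∀ z : ℝ, 0 ≤ z → z < 1 →
      HasSum (fun n : ℕ => W n x * z ^ n)
        ((1 - z * (1 - p * x) * Real.exp (-t * x))⁻¹ *
          Real.exp (∫ s in (0 : ℝ)..x,
            p * z * Real.exp (-t * s) / (1 - z * (1 - p * s) * Real.exp (-t * s)))) := by
  intro x hx z hz0 hz1
  obtain ⟨hx0, hx1⟩ := hx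
  have hz' : 0 < 1 - z := by linarith
  -- abbreviations
  set D : ℝ → ℝ := fun s => 1 - z * (1 - p * s) * Real.exp (-t * s) with hDdef
  have hDcont : Continuous D := by
    apply continuous_const.sub
    exact (continuous_const.mul (continuous_const.sub (continuous_const.mul continuous_id))).mul
      (Real.continuous_exp.comp (by continuity))
  have hDge : ∀ s ∈ Set.Icc (0:ℝ) 1, 1 - z ≤ D s := by
    rintro s ⟨hs0, hs1⟩
    have h1 : 0 ≤ 1 - p * s := by nlinarith
    have h2 : Real.exp (-t*s) ≤ 1 := by
      rw [← Real.exp_zero]; exact Real.exp_le_exp.mpr (by nlinarith)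
    have h3 : (1 - p*s) * Real.exp (-t*s) ≤ 1 := by nlinarith [(Real.exp_pos (-t*s)).le]
    have h4 : 0 ≤ (1 - p*s) * Real.exp (-t*s) := mul_nonneg h1 (Real.exp_pos _).le
    show (1:ℝ) - z ≤ 1 - z * (1 - p * s) * Real.exp (-t * s)
    nlinarith
  have hDpos : ∀ s ∈ Set.Icc (0:ℝ) 1, 0 < D s := fun s hs => lt_of_lt_of_le hz' (hDge s hs)
  have hDne : ∀ s ∈ Set.Icc (0:ℝ) 1, D s ≠ 0 := fun s hs => (hDpos s hs).ne'
  -- the generating function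
  set F : ℝ → ℝ := fun a => ∑' n, Vaux p t n a * z ^ n with hFdef
  have hbound : ∀ a ∈ Set.Icc (0:ℝ) 1, ∀ n : ℕ, ‖Vaux p t n a * z ^ n‖ ≤ z ^ n := by
    intro a ha n
    obtain ⟨h1, h2⟩ := Vaux_mem p t hp hp1 ht n a ha
    rw [Real.norm_eq_abs, abs_mul, abs_pow, abs_of_nonneg hz0, abs_of_nonneg h1]
    have : z ^ n ≤ 1 * z ^ n := by ring_nf; exact le_refl _
    nlinarith [pow_nonneg hz0 n]
  have hsum : ∀ a ∈ Set.Icc (0:ℝ) 1, HasSum (fun n => Vaux p t n a * z ^ n) (F a) := by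
    intro a ha
    exact (Summable.of_norm_bounded (summable_geometric_of_lt_one hz0 hz1)
      (hbound a ha)).hasSum
  have hFcont : ContinuousOn F (Set.Icc (0:ℝ) 1) :=
    continuousOn_tsum (fun n => ((Vaux_cont p t n).mul continuous_const).continuousOn)
      (summable_geometric_of_lt_one hz0 hz1) (fun n a ha => hbound a ha n)
  -- integral equation for F
  have key : ∀ a ∈ Set.Icc (0:ℝ) 1,
      D a * F a = 1 + p * z * ∫ y in (0:ℝ)..a, Real.exp (-t*y) * F y := by
    rintro a ⟨ha0, ha1⟩
    have hS := hsum a ⟨ha0, ha1⟩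
    have hInt : HasSum (fun n => ∫ y in (0:ℝ)..a, Real.exp (-t*y) * Vaux p t n y * z ^ n)
        (∫ y in (0:ℝ)..a, Real.exp (-t*y) * F y) := by
      apply intervalIntegral.hasSum_integral_of_dominated_convergence
        (bound := fun (n : ℕ) (_ : ℝ) => z ^ n)
      · intro n
        exact (((Real.continuous_exp.comp (by continuity)).mul (Vaux_cont p t n)).mul
          continuous_const).aestronglyMeasurable.restrict
      · intro n
        filter_upwards with y hy
        have hy' : y ∈ Set.Icc (0:ℝ) 1 := by
          rw [Set.uIoc_of_le ha0] at hy; exact ⟨hy.1.le, hy.2.trans ha1⟩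
        have hb := hbound y hy' n
        have he : Real.exp (-t*y) ≤ 1 := by
          rw [← Real.exp_zero]; exact Real.exp_le_exp.mpr (by nlinarith [hy'.1])
        calc ‖Real.exp (-t*y) * Vaux p t n y * z ^ n‖
            = Real.exp (-t*y) * ‖Vaux p t n y * z ^ n‖ := by
              rw [mul_assoc, Real.norm_eq_abs, Real.norm_eq_abs, abs_mul,
                abs_of_nonneg (Real.exp_pos _).le]
          _ ≤ 1 * (z ^ n) := by
              exact mul_le_mul he hb (norm_nonneg _) zero_le_one
          _ = z ^ n := one_mul _
      · filter_upwards with y hy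
        exact summable_geometric_of_lt_one hz0 hz1
      · exact intervalIntegrable_const
      · filter_upwards with y hy
        have hy' : y ∈ Set.Icc (0:ℝ) 1 := by
          rw [Set.uIoc_of_le ha0] at hy; exact ⟨hy.1.le, hy.2.trans ha1⟩
        have h := (hsum y hy').mul_left (Real.exp (-t*y))
        simp only [← mul_assoc] at h
        exact h
    have hmain : HasSum (fun n => Vaux p t (n+1) a * z ^ (n+1))
        (z * (1 - p*a) * Real.exp (-t*a) * F a
          + p * z * ∫ y in (0:ℝ)..a, Real.exp (-t*y) * F y) := by
      have h3 := (hS.mul_left (z * ((1 - p*a) * Real.exp (-t*a)))).add (hInt.mul_left (p * z))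
      have hfe : (fun n => z * ((1 - p*a) * Real.exp (-t*a)) * (Vaux p t n a * z ^ n)
          + p * z * ∫ y in (0:ℝ)..a, Real.exp (-t*y) * Vaux p t n y * z ^ n)
          = fun n => Vaux p t (n+1) a * z ^ (n+1) := by
        funext n
        have hVdef : Vaux p t (n+1) a = (1 - p*a) * Real.exp (-t*a) * Vaux p t n a
            + p * ∫ y in (0:ℝ)..a, Real.exp (-t*y) * Vaux p t n y := rfl
        have hintmul : (∫ y in (0:ℝ)..a, Real.exp (-t*y) * Vaux p t n y * z ^ n)
            = (∫ y in (0:ℝ)..a, Real.exp (-t*y) * Vaux p t n y) * z ^ n :=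
          intervalIntegral.integral_mul_const (z ^ n) _
        rw [hintmul, hVdef]; ring
      rw [hfe] at h3
      convert h3 using 1
      · rfl
      ring
    have hshift : HasSum (fun n => Vaux p t (n+1) a * z ^ (n+1)) (F a - 1) := by
      refine (hasSum_nat_add_iff (f := fun n => Vaux p t n a * z ^ n) 1).mpr ?_
      have : F a - 1 + ∑ i ∈ Finset.range 1, Vaux p t i a * z ^ i = F a := by
        have h0 : Vaux p t 0 a = 1 := by simp [Vaux]
        simp [h0]
      rw [this]
      exact hS
    have huniq := hshift.unique hmain
    show (1 - z * (1 - p * a) * Real.exp (-t * a)) * F a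
      = 1 + p * z * ∫ y in (0:ℝ)..a, Real.exp (-t*y) * F y
    linarith [huniq]
  -- candidate solution
  set g : ℝ → ℝ := fun s => p * z * Real.exp (-t * s) / D s with hgdef
  set I : ℝ → ℝ := fun a => ∫ s in (0:ℝ)..a, g s with hIdef
  set φ : ℝ → ℝ := fun a => (D a)⁻¹ * Real.exp (I a) with hφdef
  have hgm : Measurable g := by
    apply Measurable.div
    · exact measurable_const.mul (Real.measurable_exp.comp (measurable_id.const_mul (-t)))
    · exact hDcont.measurable
  have hgc : ∀ s ∈ Set.Icc (0:ℝ) 1, ContinuousAt g s := by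
    intro s hs
    have hnum : Continuous fun s : ℝ => p * z * Real.exp (-t * s) :=
      continuous_const.mul (Real.continuous_exp.comp (by continuity))
    exact ContinuousAt.div hnum.continuousAt hDcont.continuousAt (hDne s hs)
  have hgco : ContinuousOn g (Set.Icc (0:ℝ) 1) := fun s hs => (hgc s hs).continuousWithinAt
  have hsubI : ∀ a ∈ Set.Icc (0:ℝ) 1, Set.uIcc (0:ℝ) a ⊆ Set.Icc (0:ℝ) 1 := by
    intro a ha
    rw [Set.uIcc_of_le ha.1]
    exact Set.Icc_subset_Icc le_rfl ha.2
  have hgint : ∀ a ∈ Set.Icc (0:ℝ) 1, IntervalIntegrable g volume 0 a :=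
    fun a ha => (hgco.mono (hsubI a ha)).intervalIntegrable
  have hI' : ∀ a ∈ Set.Icc (0:ℝ) 1, HasDerivAt I (g a) a := fun a ha =>
    intervalIntegral.integral_hasDerivAt_right (hgint a ha)
      hgm.aestronglyMeasurable.stronglyMeasurableAtFilter (hgc a ha)
  have hIcont : ContinuousOn I (Set.Icc (0:ℝ) 1) :=
    fun a ha => ((hI' a ha).continuousAt).continuousWithinAt
  have hφcont : ContinuousOn φ (Set.Icc (0:ℝ) 1) :=
    (hDcont.continuousOn.inv₀ hDne).mul (Real.continuous_exp.comp_continuousOn hIcont)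
  have phi_eq : ∀ a ∈ Set.Icc (0:ℝ) 1,
      D a * φ a = 1 + p * z * ∫ y in (0:ℝ)..a, Real.exp (-t*y) * φ y := by
    intro a ha
    have hderiv : ∀ y ∈ Set.uIcc (0:ℝ) a,
        HasDerivAt (fun u => Real.exp (I u)) (Real.exp (I y) * g y) y :=
      fun y hy => (hI' y (hsubI a ha hy)).exp
    have hci : IntervalIntegrable (fun y => Real.exp (I y) * g y) volume 0 a :=
      (((Real.continuous_exp.comp_continuousOn hIcont).mul hgco).mono
        (hsubI a ha)).intervalIntegrable
    have heq := intervalIntegral.integral_eq_sub_of_hasDerivAt hderiv hci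
    have hI0 : I 0 = 0 := intervalIntegral.integral_same
    have h5 : p * z * ∫ y in (0:ℝ)..a, Real.exp (-t*y) * φ y
        = ∫ y in (0:ℝ)..a, Real.exp (I y) * g y := by
      rw [← intervalIntegral.integral_const_mul]
      apply intervalIntegral.integral_congr
      intro y hy
      have hDy := hDne y (hsubI a ha hy)
      show p * z * (Real.exp (-t*y) * φ y) = Real.exp (I y) * g y
      simp only [hφdef, hgdef]
      rw [div_eq_mul_inv]
      ring
    have hDφ : D a * φ a = Real.exp (I a) := by
      simp only [hφdef]
      rw [← mul_assoc, mul_inv_cancel₀ (hDne a ha), one_mul]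
    rw [hDφ, h5, heq, hI0, Real.exp_zero]
    ring
  -- uniqueness via Gronwall
  set δf : ℝ → ℝ := fun y => F y - φ y with hδdef
  have hδcont : ContinuousOn δf (Set.Icc (0:ℝ) 1) := hFcont.sub hφcont
  have hec : ContinuousOn (fun y => Real.exp (-t*y) * δf y) (Set.Icc (0:ℝ) 1) :=
    (Real.continuous_exp.comp (by continuity)).continuousOn.mul hδcont
  have hδeq : ∀ a ∈ Set.Icc (0:ℝ) 1,
      D a * δf a = p * z * ∫ y in (0:ℝ)..a, Real.exp (-t*y) * δf y := by
    intro a ha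
    have hFi : IntervalIntegrable (fun y => Real.exp (-t*y) * F y) volume 0 a :=
      (((Real.continuous_exp.comp (by continuity)).continuousOn.mul hFcont).mono
        (hsubI a ha)).intervalIntegrable
    have hφi : IntervalIntegrable (fun y => Real.exp (-t*y) * φ y) volume 0 a :=
      (((Real.continuous_exp.comp (by continuity)).continuousOn.mul hφcont).mono
        (hsubI a ha)).intervalIntegrable
    have hsplit : (∫ y in (0:ℝ)..a, Real.exp (-t*y) * δf y)
        = (∫ y in (0:ℝ)..a, Real.exp (-t*y) * F y)
          - ∫ y in (0:ℝ)..a, Real.exp (-t*y) * φ y := by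
      rw [← intervalIntegral.integral_sub hFi hφi]
      apply intervalIntegral.integral_congr
      intro y hy
      show Real.exp (-t*y) * δf y = Real.exp (-t*y) * F y - Real.exp (-t*y) * φ y
      simp only [hδdef]
      ring
    have k1 := key a ha
    have k2 := phi_eq a ha
    have hexp : D a * δf a = D a * F a - D a * φ a := by simp only [hδdef]; ring
    rw [hexp, hsplit, k1, k2]
    ring
  set u : ℝ → ℝ := fun a => ∫ y in (0:ℝ)..a, Real.exp (-t*y) * δf y with hudef
  have hui : IntegrableOn (fun y => Real.exp (-t*y) * δf y) (Set.uIcc (0:ℝ) 1) volume := by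
    rw [Set.uIcc_of_le zero_le_one]
    exact hec.integrableOn_Icc
  have hucont : ContinuousOn u (Set.Icc (0:ℝ) 1) := by
    have := intervalIntegral.continuousOn_primitive_interval hui
    rwa [Set.uIcc_of_le zero_le_one] at this
  have hmemIcc : ∀ a ∈ Set.Ico (0:ℝ) 1, Set.Icc (0:ℝ) 1 ∈ nhdsWithin a (Set.Ioi a) := by
    intro a ha
    exact Filter.mem_of_superset (Ioc_mem_nhdsGT_of_mem ⟨le_refl a, ha.2⟩)
      (fun y hy => ⟨ha.1.trans hy.1.le, hy.2⟩)
  have hu' : ∀ a ∈ Set.Ico (0:ℝ) 1,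
      HasDerivWithinAt u (Real.exp (-t*a) * δf a) (Set.Ici a) a := by
    intro a ha
    have haI : a ∈ Set.Icc (0:ℝ) 1 := ⟨ha.1, ha.2.le⟩
    have hint : IntervalIntegrable (fun y => Real.exp (-t*y) * δf y) volume 0 a :=
      (hec.mono (hsubI a haI)).intervalIntegrable
    have hmeas : StronglyMeasurableAtFilter (fun y => Real.exp (-t*y) * δf y)
        (nhdsWithin a (Set.Ioi a)) volume :=
      ⟨Set.Icc 0 1, hmemIcc a ha, hec.aestronglyMeasurable measurableSet_Icc⟩
    have hcw : ContinuousWithinAt (fun y => Real.exp (-t*y) * δf y) (Set.Ioi a) a :=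
      (hec.continuousWithinAt haI).mono_of_mem_nhdsWithin (hmemIcc a ha)
    exact intervalIntegral.integral_hasDerivWithinAt_right hint hmeas hcw
  have hK : ∀ a ∈ Set.Ico (0:ℝ) 1,
      ‖Real.exp (-t*a) * δf a‖ ≤ (p * z / (1 - z)) * ‖u a‖ + 0 := by
    intro a ha
    have haI : a ∈ Set.Icc (0:ℝ) 1 := ⟨ha.1, ha.2.le⟩
    have he : Real.exp (-t*a) ≤ 1 := by
      rw [← Real.exp_zero]; exact Real.exp_le_exp.mpr (by nlinarith [ha.1])
    have hδa : D a * δf a = p * z * u a := hδeq a haI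
    have hDa := hDpos a haI
    have hDga := hDge a haI
    rw [Real.norm_eq_abs, Real.norm_eq_abs, abs_mul, abs_of_nonneg (Real.exp_pos _).le,
      add_zero]
    have hδval : δf a = p * z * u a / D a := by
      field_simp
      linarith [hδa]
    have h1 : |δf a| = p * z * |u a| / D a := by
      rw [hδval, abs_div, abs_of_pos hDa, abs_mul,
        abs_of_nonneg (by positivity : (0:ℝ) ≤ p * z)]
    calc Real.exp (-t*a) * |δf a| ≤ 1 * |δf a| := by nlinarith [abs_nonneg (δf a)]
      _ = p * z * |u a| / D a := by rw [one_mul, h1]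
      _ ≤ p * z * |u a| / (1 - z) :=
          div_le_div_of_nonneg_left (by positivity) hz' hDga
      _ = p * z / (1 - z) * |u a| := by ring
  have hu0norm : ‖u 0‖ ≤ 0 := by
    have : u 0 = 0 := intervalIntegral.integral_same
    rw [this, norm_zero]
  have hgr := norm_le_gronwallBound_of_norm_deriv_right_le hucont hu' hu0norm hK
  have hux : u x = 0 := by
    have h := hgr x ⟨hx0, hx1⟩
    rw [gronwallBound_ε0_δ0] at h
    exact norm_le_zero_iff.mp h
  have hFφ : F x = φ x := by
    have h : D x * δf x = p * z * u x := hδeq x ⟨hx0, hx1⟩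
    rw [hux, mul_zero] at h
    have h2 := (mul_eq_zero.mp h).resolve_left (hDne x ⟨hx0, hx1⟩)
    simp only [hδdef] at h2
    linarith
  -- conclusion
  have hfin : (fun n : ℕ => W n x * z ^ n) = fun n => Vaux p t n x * z ^ n := by
    funext n
    rw [Vaux_eq_W p t W hW0 hWrec n x ⟨hx0, hx1⟩]
  rw [hfin]
  show HasSum (fun n => Vaux p t n x * z ^ n) (φ x)
  rw [← hFφ]
  exact hsum x ⟨hx0, hx1⟩
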